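/- Let λ > 0 and let q be a probability law on the positive integers ℕ* satisfying i·q(i) ≤ λ·q(i−1) for every i ≥ 2. Then q is dominated by the positive-conditioned Poisson law Poi⁺_λ, i.e. for every j ≥ 1, Σ_{k≥j} q(k) ≤ Σ_{k≥j} Poi⁺_λ(k). -/

import Mathlib

open Real

/-- The positive-conditioned Poisson law on `ℕ* = {1, 2, ...}`:
`Poi⁺_λ(n) = e^{-λ} λ^n / (n! (1 - e^{-λ}))`. -/
noncomputable def poiPlus (lam : ℝ) (n : ℕ) : ℝ :=
  Real.exp (-lam) * lam ^ n / (n.factorial * (1 - Real.exp (-lam)))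

lemma pp_expm_pos (lam : ℝ) (hlam : 0 < lam) : 0 < 1 - Real.exp (-lam) := by
  have : Real.exp (-lam) < 1 := by
    rw [Real.exp_lt_one_iff]; linarith
  linarith

lemma pp_pos (lam : ℝ) (hlam : 0 < lam) (n : ℕ) : 0 < poiPlus lam n := by
  unfold poiPlus
  have h1 := Real.exp_pos (-lam)
  have h2 := pp_expm_pos lam hlam
  have h3 : (0:ℝ) < n.factorial := by exact_mod_cast n.factorial_pos
  positivity

lemma pp_rec (lam : ℝ) (hlam : 0 < lam) (m : ℕ) :
    ((m + 1 : ℕ) : ℝ) * poiPlus lam (m + 1) = lam * poiPlus lam m := by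
  have hD : (1 - Real.exp (-lam)) ≠ 0 := (pp_expm_pos lam hlam).ne'
  have hf : ((m.factorial : ℝ)) ≠ 0 := by exact_mod_cast m.factorial_pos.ne'
  have hm : ((m : ℝ) + 1) ≠ 0 := by positivity
  unfold poiPlus
  rw [Nat.factorial_succ]
  push_cast
  field_simp
  ring

lemma pp_eq (lam : ℝ) (n : ℕ) :
    poiPlus lam n = (Real.exp (-lam) / (1 - Real.exp (-lam))) * (lam ^ n / n.factorial) := by
  unfold poiPlus
  rw [div_mul_div_comm, mul_comm (1 - Real.exp (-lam))]

lemma pp_summable (lam : ℝ) : Summable (fun n : ℕ => poiPlus lam n) := by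
  have := (Real.summable_pow_div_factorial lam).mul_left
    (Real.exp (-lam) / (1 - Real.exp (-lam)))
  exact this.congr fun n => (pp_eq lam n).symm

lemma pp_tsum (lam : ℝ) (hlam : 0 < lam) : ∑' n : ℕ, poiPlus lam (n + 1) = 1 := by
  have hexp : ∑' n : ℕ, lam ^ n / n.factorial = Real.exp lam := by
    rw [Real.exp_eq_exp_ℝ, NormedSpace.exp_eq_tsum_div]
  have hfull : ∑' n : ℕ, poiPlus lam n
      = Real.exp (-lam) / (1 - Real.exp (-lam)) * Real.exp lam := by
    calc ∑' n : ℕ, poiPlus lam n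
        = ∑' n : ℕ, (Real.exp (-lam) / (1 - Real.exp (-lam))) * (lam ^ n / n.factorial) :=
          tsum_congr fun n => pp_eq lam n
      _ = (Real.exp (-lam) / (1 - Real.exp (-lam))) * ∑' n : ℕ, lam ^ n / n.factorial :=
          tsum_mul_left
      _ = _ := by rw [hexp]
  have hsplit := (pp_summable lam).tsum_eq_zero_add
  have hzero : poiPlus lam 0 = Real.exp (-lam) / (1 - Real.exp (-lam)) := by
    unfold poiPlus; simp
  have h2 := pp_expm_pos lam hlam
  have h1 := Real.exp_ne_zero lam
  have hkey : poiPlus lam 0 + ∑' n : ℕ, poiPlus lam (n + 1)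
      = Real.exp (-lam) / (1 - Real.exp (-lam)) * Real.exp lam := by
    rw [← hsplit, hfull]
  rw [hzero] at hkey
  have key : Real.exp (-lam) / (1 - Real.exp (-lam)) * Real.exp lam
      - Real.exp (-lam) / (1 - Real.exp (-lam)) = 1 := by
    have h3 : (1:ℝ) < Real.exp lam := by
      have := Real.exp_lt_exp.2 hlam
      rwa [Real.exp_zero] at this
    rw [Real.exp_neg]
    field_simp
    rw [div_self (by linarith)]
  linarith

/-- If a probability law `q` on `ℕ*` satisfies `i * q i ≤ λ * q (i-1)`
for all `i ≥ 2`, then `q` is dominated by the positive-conditioned Poisson law `Poi⁺_λ`. -/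
theorem statement_3
    (lam : ℝ) (hlam : 0 < lam)
    (q : ℕ → ℝ)
    (hq_nonneg : ∀ j, 1 ≤ j → 0 ≤ q j)
    (hq_le_one : ∀ j, 1 ≤ j → q j ≤ 1)
    (hq_summable : Summable fun j : ℕ => q (j + 1))
    (hq_sum : ∑' j : ℕ, q (j + 1) = 1)
    (h : ∀ i : ℕ, 2 ≤ i → (i : ℝ) * q i ≤ lam * q (i - 1)) :
    ∀ j, 1 ≤ j → ∑' k : ℕ, q (j + k) ≤ ∑' k : ℕ, poiPlus lam (j + k) := by
  intro j hj
  set p : ℕ → ℝ := poiPlus lam with hp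
  have hppos : ∀ n, 0 < p n := pp_pos lam hlam
  set c : ℝ := q j / p j with hc
  have hc0 : 0 ≤ c := div_nonneg (hq_nonneg j hj) (hppos j).le
  have hcj : c * p j = q j := div_mul_cancel₀ (q j) (hppos j).ne'
  -- forward: q (j+k) ≤ c * p (j+k)
  have hA : ∀ k, q (j + k) ≤ c * p (j + k) := by
    intro k
    induction k with
    | zero => simpa using hcj.ge
    | succ k ih =>
      have hi := h (j + k + 1) (by omega)
      simp only [Nat.add_sub_cancel] at hi
      have hrec := pp_rec lam hlam (j + k)
      have h2 : lam * q (j + k) ≤ lam * (c * p (j + k)) :=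
        mul_le_mul_of_nonneg_left ih hlam.le
      have h3 : lam * (c * p (j + k)) = ((j + k + 1 : ℕ) : ℝ) * (c * p (j + k + 1)) := by
        rw [hp]
        linear_combination (-c) * hrec
      have hpos : (0:ℝ) < ((j + k + 1 : ℕ) : ℝ) := by positivity
      have hle : ((j + k + 1 : ℕ) : ℝ) * q (j + k + 1)
          ≤ ((j + k + 1 : ℕ) : ℝ) * (c * p (j + k + 1)) := by
        calc ((j + k + 1 : ℕ) : ℝ) * q (j + k + 1) ≤ lam * q (j + k) := hi
          _ = lam * q (j + k) := rfl
          _ ≤ lam * (c * p (j + k)) := h2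
          _ = _ := h3
      exact le_of_mul_le_mul_left hle hpos
  -- backward: c * p k ≤ q k for 1 ≤ k ≤ j
  have hB : ∀ d k, k + d = j → 1 ≤ k → c * p k ≤ q k := by
    intro d
    induction d with
    | zero =>
      intro k hk _
      have hkj : k = j := by omega
      subst hkj
      exact hcj.le
    | succ d ih =>
      intro k hkd hk1
      have ihk : c * p (k + 1) ≤ q (k + 1) := ih (k + 1) (by omega) (by omega)
      have hi := h (k + 1) (by omega)
      simp only [Nat.add_sub_cancel] at hi
      have hrec := pp_rec lam hlam k
      have h2 : ((k + 1 : ℕ) : ℝ) * (c * p (k + 1)) ≤ ((k + 1 : ℕ) : ℝ) * q (k + 1) :=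
        mul_le_mul_of_nonneg_left ihk (by positivity)
      have h3 : ((k + 1 : ℕ) : ℝ) * (c * p (k + 1)) = lam * (c * p k) := by
        rw [hp]
        linear_combination c * hrec
      have hle : lam * (c * p k) ≤ lam * q k := by
        calc lam * (c * p k) = ((k + 1 : ℕ) : ℝ) * (c * p (k + 1)) := h3.symm
          _ ≤ ((k + 1 : ℕ) : ℝ) * q (k + 1) := h2
          _ ≤ lam * q k := hi
      exact le_of_mul_le_mul_left hle hlam
  -- summability of tails
  have hqtail : Summable (fun k : ℕ => q (j + k)) := by
    have hs := (summable_nat_add_iff (f := fun n => q (n + 1)) (j - 1)).2 hq_summable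
    exact hs.congr fun n => congrArg q (by omega)
  have hptail : Summable (fun k : ℕ => p (j + k)) := by
    have hs := (summable_nat_add_iff (f := p) j).2 (pp_summable lam)
    exact hs.congr fun n => by rw [Nat.add_comm]
  rcases le_total c 1 with hcle | hcge
  · -- c ≤ 1 case
    calc ∑' k : ℕ, q (j + k) ≤ ∑' k : ℕ, c * p (j + k) :=
          Summable.tsum_le_tsum (fun k => hA k) hqtail (hptail.mul_left c)
      _ = c * ∑' k : ℕ, p (j + k) := tsum_mul_left
      _ ≤ 1 * ∑' k : ℕ, p (j + k) := by
          apply mul_le_mul_of_nonneg_right hcle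
          exact tsum_nonneg fun k => (hppos _).le
      _ = ∑' k : ℕ, p (j + k) := one_mul _
  · -- 1 ≤ c case
    have hqsplit := hq_summable.sum_add_tsum_nat_add (j - 1)
    have hpsum : ∑' n : ℕ, p (n + 1) = 1 := pp_tsum lam hlam
    have hpsummable : Summable (fun n : ℕ => p (n + 1)) :=
      (summable_nat_add_iff 1).2 (pp_summable lam)
    have hpsplit := hpsummable.sum_add_tsum_nat_add (j - 1)
    rw [hq_sum] at hqsplit
    rw [hpsum] at hpsplit
    have hqtail_eq : ∑' k : ℕ, q (k + (j - 1) + 1) = ∑' k : ℕ, q (j + k) :=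
      tsum_congr fun k => by congr 1; omega
    have hptail_eq : ∑' k : ℕ, p (k + (j - 1) + 1) = ∑' k : ℕ, p (j + k) :=
      tsum_congr fun k => by congr 1; omega
    rw [hqtail_eq] at hqsplit
    rw [hptail_eq] at hpsplit
    have hhead : ∑ i ∈ Finset.range (j - 1), p (i + 1)
        ≤ ∑ i ∈ Finset.range (j - 1), q (i + 1) := by
      apply Finset.sum_le_sum
      intro i hi
      have hij : i + 1 ≤ j := by
        have := Finset.mem_range.1 hi; omega
      have hb := hB (j - (i + 1)) (i + 1) (by omega) (by omega)
      nlinarith [hppos (i + 1)]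
    linarith
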